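/- Let q be an odd prime power, d ≥ 1, and V = {(x,y) ∈ F_q^d × F_q^d : ‖x‖ = ‖y‖} where ‖x‖ = x₁²+⋯+x_d². Then the Fourier transform V̂(m,m') = q^{−2d} Σ_{(x,y)∈V} χ(−x·m − y·m') equals: (1/q) + (q−1)/q^{d+1} if (m,m')=(0,0); (q−1)/q^{d+1} if (m,m')≠(0,0) and ‖m‖=‖m'‖; and −1/q^{d+1} if ‖m‖≠‖m'‖. -/

import Mathlib

open Finset Matrix

section aux

variable {F : Type} [Field F] [Fintype F] [DecidableEq F]

private noncomputable def etac (F : Type) [Field F] [Fintype F] [DecidableEq F] : MulChar F ℂ :=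
  (quadraticChar F).ringHomComp (Int.castRingHom ℂ)

private lemma etac_ne_one (hq : ringChar F ≠ 2) : etac F ≠ 1 :=
  (MulChar.ringHomComp_ne_one_iff (Int.cast_injective (α := ℂ))).mpr (quadraticChar_ne_one hq)

private lemma etac_quad : (etac F).IsQuadratic :=
  (quadraticChar_isQuadratic F).comp _

private lemma etac_mul_self {a : F} (ha : a ≠ 0) : etac F a * etac F a = 1 := by
  have := quadraticChar_sq_one (F := F) ha
  rw [pow_two] at this
  simp only [etac, MulChar.ringHomComp_apply]
  rw [← _root_.map_mul, this, _root_.map_one]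

private lemma addchar_sum (χ : AddChar F ℂ) {ι : Type} (s : Finset ι) (f : ι → F) :
    χ (∑ i ∈ s, f i) = ∏ i ∈ s, χ (f i) := by
  induction s using Finset.cons_induction with
  | empty => simp
  | cons a s ha ih => simp [Finset.sum_cons, Finset.prod_cons, AddChar.map_add_eq_mul, ih]

private lemma sum_sq (hq : ringChar F ≠ 2) (χ : AddChar F ℂ) (hχ : χ ≠ 1)
    {s : F} (hs : s ≠ 0) :
    ∑ x : F, χ (s * x ^ 2) = etac F s * gaussSum (etac F) χ := by
  have hprim : χ.IsPrimitive := AddChar.IsPrimitive.of_ne_one hχ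
  have h1 : ∑ x : F, χ (s * x ^ 2)
      = ∑ t : F, (Fintype.card {x : F // x ^ 2 = t} : ℂ) * χ (s * t) := by
    rw [← Fintype.sum_fiberwise' (fun x : F => x ^ 2) (fun t => χ (s * t))]
    congr 1
    ext t
    simp [Finset.sum_const, nsmul_eq_mul]
  have h2 : ∀ t : F, (Fintype.card {x : F // x ^ 2 = t} : ℂ)
      = ((quadraticChar F t : ℤ) : ℂ) + 1 := by
    intro t
    have h := quadraticChar_card_sqrts hq t
    have h' : (Fintype.card {x : F // x ^ 2 = t} : ℤ) = quadraticChar F t + 1 := by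
      rw [← h, Set.toFinset_card]
      norm_cast
    exact_mod_cast congrArg (Int.cast : ℤ → ℂ) h'
  have h3 : ∑ t : F, χ (s * t) = 0 := by
    have := AddChar.sum_mulShift (R := F) (R' := ℂ) s hprim
    rw [if_neg hs] at this
    push_cast at this
    rw [← this]
    exact Finset.sum_congr rfl fun t _ => by rw [mul_comm]
  have h4 : ∑ t : F, etac F t * χ (s * t)
      = gaussSum (etac F) (AddChar.mulShift χ s) := by
    unfold gaussSum
    exact Finset.sum_congr rfl fun t _ => by rw [AddChar.mulShift_apply, mul_comm s t]
  have h5 : etac F s * gaussSum (etac F) (AddChar.mulShift χ s) = gaussSum (etac F) χ := by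
    have := gaussSum_mulShift (etac F) χ (Units.mk0 s hs)
    simpa using this
  calc ∑ x : F, χ (s * x ^ 2)
      = ∑ t : F, (((quadraticChar F t : ℤ) : ℂ) + 1) * χ (s * t) := by
        rw [h1]; exact Finset.sum_congr rfl fun t _ => by rw [h2]
    _ = ∑ t : F, etac F t * χ (s * t) + ∑ t : F, χ (s * t) := by
        rw [← Finset.sum_add_distrib]
        exact Finset.sum_congr rfl fun t _ => by
          rw [add_mul, one_mul]; rfl
    _ = gaussSum (etac F) (AddChar.mulShift χ s) := by rw [h3, h4, add_zero]
    _ = etac F s * gaussSum (etac F) χ := by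
        rw [← h5, ← mul_assoc, etac_mul_self hs, one_mul]


private lemma two_ne_zero_F (hq : ringChar F ≠ 2) : (2 : F) ≠ 0 :=
  Ring.two_ne_zero hq

private lemma comp_sq (hq : ringChar F ≠ 2) (χ : AddChar F ℂ) (hχ : χ ≠ 1)
    {s : F} (hs : s ≠ 0) (b : F) :
    ∑ x : F, χ (s * x ^ 2 + b * x)
      = χ (-(b ^ 2) / (4 * s)) * (etac F s * gaussSum (etac F) χ) := by
  have h2 : (2 : F) ≠ 0 := two_ne_zero_F hq
  have h4 : (4 : F) ≠ 0 := by
    have : (4 : F) = 2 * 2 := by norm_num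
    rw [this]; exact mul_ne_zero h2 h2
  have key : ∀ x : F, s * (x - b / (2 * s)) ^ 2 + b * (x - b / (2 * s))
      = s * x ^ 2 + (-(b ^ 2) / (4 * s)) := by
    intro x
    field_simp
    ring
  calc ∑ x : F, χ (s * x ^ 2 + b * x)
      = ∑ x : F, χ (s * (x - b / (2 * s)) ^ 2 + b * (x - b / (2 * s))) :=
        (Fintype.sum_equiv (Equiv.subRight (b / (2 * s)))
          _ _ (fun x => by simp [Equiv.subRight])).symm
    _ = ∑ x : F, χ (-(b ^ 2) / (4 * s)) * χ (s * x ^ 2) := by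
        refine Finset.sum_congr rfl fun x _ => ?_
        rw [key x, AddChar.map_add_eq_mul, mul_comm]
    _ = χ (-(b ^ 2) / (4 * s)) * (etac F s * gaussSum (etac F) χ) := by
        rw [← Finset.mul_sum, sum_sq hq χ hχ hs]

private lemma vec_sum (hq : ringChar F ≠ 2) (χ : AddChar F ℂ) (hχ : χ ≠ 1)
    {d : ℕ} {s : F} (hs : s ≠ 0) (b : Fin d → F) :
    ∑ x : Fin d → F, χ (s * (x ⬝ᵥ x) + x ⬝ᵥ b)
      = χ (-(b ⬝ᵥ b) / (4 * s)) * (etac F s * gaussSum (etac F) χ) ^ d := by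
  have step1 : ∀ x : Fin d → F,
      χ (s * (x ⬝ᵥ x) + x ⬝ᵥ b) = ∏ i, χ (s * (x i) ^ 2 + b i * (x i)) := by
    intro x
    rw [← addchar_sum]
    congr 1
    simp only [dotProduct, Finset.mul_sum, ← Finset.sum_add_distrib]
    exact Finset.sum_congr rfl fun i _ => by ring
  calc ∑ x : Fin d → F, χ (s * (x ⬝ᵥ x) + x ⬝ᵥ b)
      = ∑ x : Fin d → F, ∏ i, χ (s * (x i) ^ 2 + b i * (x i)) :=
        Finset.sum_congr rfl fun x _ => step1 x
    _ = ∏ i, ∑ t : F, χ (s * t ^ 2 + b i * t) := by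
        rw [Finset.prod_univ_sum]
        rw [← Fintype.piFinset_univ]
    _ = ∏ i : Fin d, χ (-((b i) ^ 2) / (4 * s)) * (etac F s * gaussSum (etac F) χ) := by
        exact Finset.prod_congr rfl fun i _ => comp_sq hq χ hχ hs (b i)
    _ = χ (-(b ⬝ᵥ b) / (4 * s)) * (etac F s * gaussSum (etac F) χ) ^ d := by
        rw [Finset.prod_mul_distrib, Finset.prod_const, Finset.card_univ, Fintype.card_fin,
          ← addchar_sum]
        congr 2
        rw [dotProduct, ← Finset.sum_div, ← Finset.sum_neg_distrib]
        congr 1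
        exact Finset.sum_congr rfl fun i _ => by ring

private lemma orth (χ : AddChar F ℂ) (hχ : χ ≠ 1) {d : ℕ} (b : Fin d → F) :
    ∑ x : Fin d → F, χ (x ⬝ᵥ b) = if b = 0 then (Fintype.card F : ℂ) ^ d else 0 := by
  have hprim : χ.IsPrimitive := AddChar.IsPrimitive.of_ne_one hχ
  have step : ∑ x : Fin d → F, χ (x ⬝ᵥ b)
      = ∏ i, ∑ t : F, χ (t * b i) := by
    rw [Finset.prod_univ_sum, ← Fintype.piFinset_univ]
    exact Finset.sum_congr rfl fun x _ => by rw [← addchar_sum]; rfl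
  rw [step]
  by_cases hb : b = 0
  · subst hb
    rw [if_pos rfl]
    simp [AddChar.sum_mulShift _ hprim]
  · rw [if_neg hb]
    obtain ⟨i, hi⟩ : ∃ i, b i ≠ 0 := by
      by_contra h
      push_neg at h
      exact hb (funext h)
    refine Finset.prod_eq_zero (Finset.mem_univ i) ?_
    rw [AddChar.sum_mulShift _ hprim, if_neg hi]
    norm_num


private lemma AB_prod (hq : ringChar F ≠ 2) (χ : AddChar F ℂ) (hχ : χ ≠ 1)
    {s : F} (hs : s ≠ 0) (d : ℕ) :
    (etac F s * gaussSum (etac F) χ) ^ d * (etac F (-s) * gaussSum (etac F) χ) ^ d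
      = (Fintype.card F : ℂ) ^ d := by
  rw [← mul_pow]
  congr 1
  have hprim : χ.IsPrimitive := AddChar.IsPrimitive.of_ne_one hχ
  have hg : gaussSum (etac F) χ ^ 2 = etac F (-1) * Fintype.card F :=
    gaussSum_sq (etac_ne_one hq) etac_quad hprim
  have hneg : etac F (-s) = etac F (-1) * etac F s := by
    rw [← _root_.map_mul]
    norm_num
  have h1 : etac F (-1) * etac F (-1) = 1 := etac_mul_self (by norm_num)
  calc etac F s * gaussSum (etac F) χ * (etac F (-s) * gaussSum (etac F) χ)
      = etac F (-1) * (etac F s * etac F s) * gaussSum (etac F) χ ^ 2 := by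
        rw [hneg]; ring
    _ = etac F (-1) * gaussSum (etac F) χ ^ 2 := by rw [etac_mul_self hs, mul_one]
    _ = etac F (-1) * etac F (-1) * (Fintype.card F : ℂ) := by rw [hg]; ring
    _ = (Fintype.card F : ℂ) := by rw [h1, one_mul]

private lemma sum_nonzero (hq : ringChar F ≠ 2) (χ : AddChar F ℂ) (hχ : χ ≠ 1) (c : F) :
    ∑ s ∈ Finset.univ \ {(0 : F)}, χ (c / (4 * s))
      = (if c = 0 then (Fintype.card F : ℂ) else 0) - 1 := by
  have hprim : χ.IsPrimitive := AddChar.IsPrimitive.of_ne_one hχ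
  have h4 : (4 : F) ≠ 0 := by
    have h2 := two_ne_zero_F hq
    have : (4 : F) = 2 * 2 := by norm_num
    rw [this]; exact mul_ne_zero h2 h2
  have step : ∑ s ∈ Finset.univ \ {(0 : F)}, χ (c / (4 * s))
      = ∑ t ∈ Finset.univ \ {(0 : F)}, χ (t * c) := by
    refine Finset.sum_nbij' (fun s => (4 * s)⁻¹) (fun t => (4 * t)⁻¹) ?_ ?_ ?_ ?_ ?_
    · intro s hs
      simp only [Finset.mem_sdiff, Finset.mem_univ, Finset.mem_singleton, true_and] at hs ⊢
      exact inv_ne_zero (mul_ne_zero h4 hs)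
    · intro t ht
      simp only [Finset.mem_sdiff, Finset.mem_univ, Finset.mem_singleton, true_and] at ht ⊢
      exact inv_ne_zero (mul_ne_zero h4 ht)
    · intro s hs
      simp only [Finset.mem_sdiff, Finset.mem_univ, Finset.mem_singleton, true_and] at hs
      field_simp
    · intro t ht
      simp only [Finset.mem_sdiff, Finset.mem_univ, Finset.mem_singleton, true_and] at ht
      field_simp
    · intro s hs
      simp only [Finset.mem_sdiff, Finset.mem_univ, Finset.mem_singleton, true_and] at hs
      rw [div_eq_mul_inv, mul_comm]
  rw [step]
  have full : ∑ t : F, χ (t * c) = if c = 0 then (Fintype.card F : ℂ) else 0 := by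
    have := AddChar.sum_mulShift (R := F) (R' := ℂ) c hprim
    push_cast at this
    rw [this]
  have : ∑ t : F, χ (t * c)
      = χ (0 * c) + ∑ t ∈ Finset.univ \ {(0 : F)}, χ (t * c) := by
    rw [Finset.sum_eq_sum_sdiff_singleton_add (Finset.mem_univ (0 : F))]
    ring
  rw [full] at this
  rw [zero_mul, AddChar.map_zero_eq_one] at this
  linear_combination -this

set_option maxHeartbeats 2000000 in
private lemma master (hq : ringChar F ≠ 2) (χ : AddChar F ℂ) (hχ : χ ≠ 1)
    (d : ℕ) (m m' : Fin d → F) :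
    (∑ x : Fin d → F, ∑ y : Fin d → F,
        if x ⬝ᵥ x = y ⬝ᵥ y then χ (-(x ⬝ᵥ m) - y ⬝ᵥ m') else 0)
      = (Fintype.card F : ℂ)⁻¹ *
          ((if m = 0 ∧ m' = 0 then (Fintype.card F : ℂ) ^ (2 * d) else 0)
            + (Fintype.card F : ℂ) ^ d *
              ((if m ⬝ᵥ m = m' ⬝ᵥ m' then (Fintype.card F : ℂ) else 0) - 1)) := by
  classical
  have hprim : χ.IsPrimitive := AddChar.IsPrimitive.of_ne_one hχ
  set q : ℂ := (Fintype.card F : ℂ) with hqdef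
  set g : ℂ := gaussSum (etac F) χ with hgdef
  obtain ⟨a, ha⟩ : ∃ a : F → (Fin d → F) → ℂ,
      a = fun s x => χ (s * (x ⬝ᵥ x) + x ⬝ᵥ (-m)) := ⟨_, rfl⟩
  obtain ⟨b, hb⟩ : ∃ b : F → (Fin d → F) → ℂ,
      b = fun s y => χ ((-s) * (y ⬝ᵥ y) + y ⬝ᵥ (-m')) := ⟨_, rfl⟩
  have point : ∀ x y : Fin d → F,
      (if x ⬝ᵥ x = y ⬝ᵥ y then χ (-(x ⬝ᵥ m) - y ⬝ᵥ m') else 0)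
        = q⁻¹ * ∑ s : F, a s x * b s y := by
    intro x y
    have hterm : ∀ s : F, a s x * b s y
        = χ (s * (x ⬝ᵥ x - y ⬝ᵥ y)) * χ (-(x ⬝ᵥ m) - y ⬝ᵥ m') := by
      intro s
      simp only [ha, hb]
      rw [← AddChar.map_add_eq_mul, ← AddChar.map_add_eq_mul]
      congr 1
      rw [dotProduct_neg, dotProduct_neg]
      ring
    have hsum : ∑ s : F, χ (s * (x ⬝ᵥ x - y ⬝ᵥ y))
        = if x ⬝ᵥ x = y ⬝ᵥ y then q else 0 := by
      have h := AddChar.sum_mulShift (R := F) (R' := ℂ) (x ⬝ᵥ x - y ⬝ᵥ y) hprim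
      rw [h]
      by_cases hc : x ⬝ᵥ x = y ⬝ᵥ y
      · rw [if_pos (sub_eq_zero.mpr hc), if_pos hc]
      · rw [if_neg (fun h0 => hc (sub_eq_zero.mp h0)), if_neg hc]
        norm_num
    rw [Finset.sum_congr rfl fun s _ => hterm s, ← Finset.sum_mul, hsum]
    by_cases hc : x ⬝ᵥ x = y ⬝ᵥ y
    · rw [if_pos hc, if_pos hc, inv_mul_cancel_left₀]
      simp only [hqdef]
      exact_mod_cast Nat.cast_ne_zero.mpr Fintype.card_ne_zero
    · rw [if_neg hc, if_neg hc, zero_mul, mul_zero]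
  have swap : (∑ x : Fin d → F, ∑ y : Fin d → F,
        if x ⬝ᵥ x = y ⬝ᵥ y then χ (-(x ⬝ᵥ m) - y ⬝ᵥ m') else 0)
      = q⁻¹ * ∑ s : F, (∑ x : Fin d → F, a s x) * (∑ y : Fin d → F, b s y) := by
    calc (∑ x : Fin d → F, ∑ y : Fin d → F,
          if x ⬝ᵥ x = y ⬝ᵥ y then χ (-(x ⬝ᵥ m) - y ⬝ᵥ m') else 0)
        = ∑ x : Fin d → F, ∑ y : Fin d → F, q⁻¹ * ∑ s : F, a s x * b s y :=
          Finset.sum_congr rfl fun x _ => Finset.sum_congr rfl fun y _ => point x y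
      _ = q⁻¹ * ∑ x : Fin d → F, ∑ y : Fin d → F, ∑ s : F, a s x * b s y := by
          rw [Finset.mul_sum]
          exact Finset.sum_congr rfl fun x _ => (Finset.mul_sum _ _ _).symm
      _ = q⁻¹ * ∑ s : F, ∑ x : Fin d → F, ∑ y : Fin d → F, a s x * b s y := by
          congr 1
          have h1 : (∑ x : Fin d → F, ∑ y : Fin d → F, ∑ s : F, a s x * b s y)
              = ∑ x : Fin d → F, ∑ s : F, ∑ y : Fin d → F, a s x * b s y :=
            Finset.sum_congr rfl fun x _ => Finset.sum_comm
          have h2 : (∑ x : Fin d → F, ∑ s : F, ∑ y : Fin d → F, a s x * b s y)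
              = ∑ s : F, ∑ x : Fin d → F, ∑ y : Fin d → F, a s x * b s y :=
            Finset.sum_comm
          rw [h1, h2]
      _ = q⁻¹ * ∑ s : F, (∑ x : Fin d → F, a s x) * (∑ y : Fin d → F, b s y) := by
          congr 1
          exact Finset.sum_congr rfl fun s _ => (Finset.sum_mul_sum _ _ _ _).symm
  rw [swap]
  congr 1
  -- split off s = 0
  rw [Finset.sum_eq_sum_sdiff_singleton_add (Finset.mem_univ (0 : F))]
  have hA0 : (∑ x : Fin d → F, a 0 x) * (∑ y : Fin d → F, b 0 y)
      = if m = 0 ∧ m' = 0 then q ^ (2 * d) else 0 := by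
    have e1 : ∑ x : Fin d → F, a 0 x = if m = 0 then q ^ d else 0 := by
      have : ∀ x : Fin d → F, a 0 x = χ (x ⬝ᵥ (-m)) := by
        intro x; simp only [ha]; simp
      rw [Finset.sum_congr rfl fun x _ => this x, orth χ hχ]
      simp only [neg_eq_zero]
      rfl
    have e2 : ∑ y : Fin d → F, b 0 y = if m' = 0 then q ^ d else 0 := by
      have : ∀ y : Fin d → F, b 0 y = χ (y ⬝ᵥ (-m')) := by
        intro y; simp only [hb]; simp
      rw [Finset.sum_congr rfl fun y _ => this y, orth χ hχ]
      simp only [neg_eq_zero]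
      rfl
    rw [e1, e2]
    by_cases h1 : m = 0 <;> by_cases h2 : m' = 0 <;>
      simp [h1, h2, ← pow_add, two_mul]
  have hAB : ∀ s ∈ Finset.univ \ {(0 : F)},
      (∑ x : Fin d → F, a s x) * (∑ y : Fin d → F, b s y)
        = χ ((m' ⬝ᵥ m' - m ⬝ᵥ m) / (4 * s)) * q ^ d := by
    intro s hs
    simp only [Finset.mem_sdiff, Finset.mem_univ, Finset.mem_singleton, true_and] at hs
    have eA : ∑ x : Fin d → F, a s x
        = χ (-(m ⬝ᵥ m) / (4 * s)) * (etac F s * g) ^ d := by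
      simp only [ha]
      have := vec_sum hq χ hχ hs (-m)
      rw [this]
      congr 2
      simp [neg_dotProduct, dotProduct_neg]
    have eB : ∑ y : Fin d → F, b s y
        = χ ((m' ⬝ᵥ m') / (4 * s)) * (etac F (-s) * g) ^ d := by
      simp only [hb]
      have := vec_sum hq χ hχ (neg_ne_zero.mpr hs) (-m')
      rw [this]
      congr 2
      rw [neg_dotProduct, dotProduct_neg, neg_neg]
      rw [show (4 : F) * -s = -(4 * s) by ring, div_neg, neg_div, neg_neg]
    rw [eA, eB]
    calc χ (-(m ⬝ᵥ m) / (4 * s)) * (etac F s * g) ^ d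
          * (χ ((m' ⬝ᵥ m') / (4 * s)) * (etac F (-s) * g) ^ d)
        = χ (-(m ⬝ᵥ m) / (4 * s)) * χ ((m' ⬝ᵥ m') / (4 * s))
          * ((etac F s * g) ^ d * (etac F (-s) * g) ^ d) := by ring
      _ = χ ((m' ⬝ᵥ m' - m ⬝ᵥ m) / (4 * s)) * q ^ d := by
          rw [AB_prod hq χ hχ hs d, ← AddChar.map_add_eq_mul, ← add_div]
          ring_nf
          rfl
  rw [Finset.sum_congr rfl hAB, ← Finset.sum_mul, sum_nonzero hq χ hχ, hA0]
  have hcond : (if m' ⬝ᵥ m' - m ⬝ᵥ m = 0 then (Fintype.card F : ℂ) else 0)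
      = (if m ⬝ᵥ m = m' ⬝ᵥ m' then q else 0) := by
    by_cases hc : m ⬝ᵥ m = m' ⬝ᵥ m'
    · rw [if_pos (by rw [hc, sub_self]), if_pos hc]
    · rw [if_neg (fun h0 => hc (sub_eq_zero.mp h0).symm), if_neg hc]
  rw [hcond]
  ring

end aux

/-- Fourier transform of the variety `V = {(x,y) : ‖x‖ = ‖y‖} ⊆ F_q^{2d}`:
`V̂(0,0) = 1/q + (q−1)/q^{d+1}`, `V̂(m,m') = (q−1)/q^{d+1}` if `(m,m') ≠ (0,0)`
and `‖m‖ = ‖m'‖`, and `V̂(m,m') = −1/q^{d+1}` if `‖m‖ ≠ ‖m'‖`. -/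
theorem stmt_7 (F : Type) [Field F] [Fintype F] [DecidableEq F]
    (hq : ringChar F ≠ 2)
    (χ : AddChar F ℂ) (hχ : χ ≠ 1)
    (d : ℕ)
    (Vhat : (Fin d → F) → (Fin d → F) → ℂ)
    (hV : ∀ m m', Vhat m m'
      = ((Fintype.card F : ℂ) ^ (2 * d))⁻¹ *
          ∑ x : Fin d → F, ∑ y : Fin d → F,
            if x ⬝ᵥ x = y ⬝ᵥ y then χ (-(x ⬝ᵥ m) - y ⬝ᵥ m') else 0)
    (m m' : Fin d → F) :
    (m = 0 ∧ m' = 0 →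
      Vhat m m' = 1 / (Fintype.card F : ℂ)
        + ((Fintype.card F : ℂ) - 1) / (Fintype.card F : ℂ) ^ (d + 1))
    ∧ (¬(m = 0 ∧ m' = 0) → m ⬝ᵥ m = m' ⬝ᵥ m' →
      Vhat m m' = ((Fintype.card F : ℂ) - 1) / (Fintype.card F : ℂ) ^ (d + 1))
    ∧ (m ⬝ᵥ m ≠ m' ⬝ᵥ m' →
      Vhat m m' = -1 / (Fintype.card F : ℂ) ^ (d + 1)) := by
  have hq0 : (Fintype.card F : ℂ) ≠ 0 := Nat.cast_ne_zero.mpr Fintype.card_ne_zero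
  have key := master hq χ hχ d m m'
  rw [hV m m', key]
  refine ⟨?_, ?_, ?_⟩
  · rintro ⟨h1, h2⟩
    rw [if_pos ⟨h1, h2⟩, if_pos (by rw [h1, h2])]
    rw [two_mul, pow_add]
    field_simp
    ring
  · intro h1 h2
    rw [if_neg h1, if_pos h2]
    rw [two_mul, pow_add]
    field_simp
    ring
  · intro h
    rw [if_neg (fun ⟨h1, h2⟩ => h (by rw [h1, h2])), if_neg h]
    rw [two_mul, pow_add]
    field_simp
    ring
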